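/- (MaxWeight-α drift condition) Let f(x) = x^α for α > 0 and g be a sublinear increasing function with lim_{x→∞} x^{α−1}/g(x^α) = 0. Then for the Lyapunov function V(L) = Σ_{i,j} L_{ij}^{α+1}/(α+1), the per-slot drift along direction Δ with |Δ_{ij}| ≤ A_max satisfies V(L+Δ) − V(L) ≤ ⟨f(L), Δ⟩ + C·(1 + Σ_{i,j} L_{ij}^{max(α−1,0)}) for a constant C depending only on N, α, A_max, where f(L) denotes entrywise application of f. -/

import Mathlib

open Real

/-- Tangent-line inequality for `x ↦ x^p`, `p ≥ 1`, at the point `b`. -/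
lemma rpow_tangent' {p : ℝ} (hp : 1 ≤ p) {a b : ℝ} (ha : 0 ≤ a) (hb : 0 ≤ b) :
    b ^ p - a ^ p ≤ p * b ^ (p - 1) * (b - a) := by
  have hp0 : (0:ℝ) ≤ p := le_trans zero_le_one hp
  have hp1 : (0:ℝ) ≤ p - 1 := by linarith
  rcases lt_trichotomy a b with hab | hab | hab
  · obtain ⟨c, hc, hceq⟩ := exists_hasDerivAt_eq_slope (fun x : ℝ => x ^ p)
      (fun x => p * x ^ (p - 1)) hab
      (HasDerivAt.continuousOn (fun x _ => Real.hasDerivAt_rpow_const (Or.inr hp)))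
      (fun x _ => Real.hasDerivAt_rpow_const (Or.inr hp))
    have h1 : b ^ p - a ^ p = p * c ^ (p - 1) * (b - a) := by
      have := (div_eq_iff (sub_ne_zero.2 (ne_of_gt hab))).mp hceq.symm
      linarith [this]
    have hc0 : 0 ≤ c := le_trans ha hc.1.le
    have h2 : c ^ (p - 1) ≤ b ^ (p - 1) := Real.rpow_le_rpow hc0 hc.2.le hp1
    have h3 : p * c ^ (p-1) * (b - a) ≤ p * b ^ (p-1) * (b - a) :=
      mul_le_mul_of_nonneg_right (mul_le_mul_of_nonneg_left h2 hp0)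
        (sub_nonneg.2 hab.le)
    linarith
  · simp [hab]
  · obtain ⟨c, hc, hceq⟩ := exists_hasDerivAt_eq_slope (fun x : ℝ => x ^ p)
      (fun x => p * x ^ (p - 1)) hab
      (HasDerivAt.continuousOn (fun x _ => Real.hasDerivAt_rpow_const (Or.inr hp)))
      (fun x _ => Real.hasDerivAt_rpow_const (Or.inr hp))
    have h1 : a ^ p - b ^ p = p * c ^ (p - 1) * (a - b) := by
      have := (div_eq_iff (sub_ne_zero.2 (ne_of_gt hab))).mp hceq.symm
      linarith [this]
    have h2 : b ^ (p - 1) ≤ c ^ (p - 1) := Real.rpow_le_rpow hb hc.1.le hp1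
    have h3 : p * b ^ (p-1) * (a - b) ≤ p * c ^ (p-1) * (a - b) :=
      mul_le_mul_of_nonneg_right (mul_le_mul_of_nonneg_left h2 hp0)
        (sub_nonneg.2 hab.le)
    nlinarith [h1, h3]

/-- Subadditivity-type bound for `x ↦ x^p` with `0 ≤ p ≤ 1`. -/
lemma rpow_sub_le_sub_rpow' {p x y : ℝ} (hp0 : 0 ≤ p) (hp1 : p ≤ 1)
    (hx : 0 ≤ x) (hxy : x ≤ y) : y ^ p - x ^ p ≤ (y - x) ^ p := by
  have hyx : 0 ≤ y - x := sub_nonneg.2 hxy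
  have h := NNReal.rpow_add_le_add_rpow x.toNNReal (y - x).toNNReal hp0 hp1
  have h2 := NNReal.coe_le_coe.2 h
  push_cast [NNReal.coe_rpow, Real.coe_toNNReal _ hx, Real.coe_toNNReal _ hyx] at h2
  have h3 : x + (y - x) = y := by ring
  rw [h3] at h2
  linarith

lemma pow_bound_aux' {α A x : ℝ} (hα : 1 ≤ α) (hA : 0 ≤ A) (hx : 0 ≤ x) :
    (x + A) ^ (α - 1) ≤ ((2*A) ^ (α - 1) + 2 ^ (α - 1)) * (1 + x ^ (α - 1)) := by
  have hm : (0:ℝ) ≤ α - 1 := by linarith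
  have hxp : (0:ℝ) ≤ x ^ (α - 1) := Real.rpow_nonneg hx _
  have hAp : (0:ℝ) ≤ (2*A) ^ (α - 1) := Real.rpow_nonneg (by linarith) _
  have h2p : (0:ℝ) ≤ 2 ^ (α - 1) := Real.rpow_nonneg (by norm_num) _
  rcases le_total x A with hc | hc
  · have : (x + A) ^ (α - 1) ≤ (2*A) ^ (α - 1) :=
      Real.rpow_le_rpow (by linarith) (by linarith) hm
    nlinarith
  · have h1 : (x + A) ^ (α - 1) ≤ (2*x) ^ (α - 1) :=
      Real.rpow_le_rpow (by linarith) (by linarith) hm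
    have h2 : (2*x) ^ (α - 1) = 2 ^ (α - 1) * x ^ (α - 1) :=
      Real.mul_rpow (by norm_num) hx
    nlinarith

set_option maxHeartbeats 1000000 in
/-- Pointwise drift bound. -/
lemma ptC' (α A : ℝ) (hα : 0 < α) (hA : 0 ≤ A) :
    ∃ C0 : ℝ, 0 ≤ C0 ∧ ∀ x δ : ℝ, 0 ≤ x → 0 ≤ x + δ → |δ| ≤ A →
      (x + δ) ^ (α + 1) / (α + 1) - x ^ (α + 1) / (α + 1)
        ≤ x ^ α * δ + C0 * (1 + x ^ max (α - 1) 0) := by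
  have key : ∃ C0 : ℝ, 0 ≤ C0 ∧ ∀ x δ : ℝ, 0 ≤ x → 0 ≤ x + δ → |δ| ≤ A →
      ((x + δ) ^ α - x ^ α) * δ ≤ C0 * (1 + x ^ max (α - 1) 0) := by
    rcases le_or_gt α 1 with h1 | h1
    · refine ⟨A ^ α * A, mul_nonneg (Real.rpow_nonneg hA _) hA, ?_⟩
      intro x δ hx hb hδ
      have hmax : max (α - 1) 0 = 0 := max_eq_right (by linarith)
      rw [hmax, Real.rpow_zero]
      have hAα : (0:ℝ) ≤ A ^ α := Real.rpow_nonneg hA _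
      have habs : ((x + δ) ^ α - x ^ α) * δ ≤ A ^ α * A := by
        rcases le_total 0 δ with hd | hd
        · have h2 : (x + δ) ^ α - x ^ α ≤ δ ^ α := by
            have := rpow_sub_le_sub_rpow' (p := α) hα.le h1 hx (by linarith : x ≤ x + δ)
            simpa using this
          have h3 : δ ^ α ≤ A ^ α := Real.rpow_le_rpow hd (le_of_abs_le hδ) hα.le
          exact mul_le_mul (h2.trans h3) (le_of_abs_le hδ) hd hAα
        · have h2 : x ^ α - (x + δ) ^ α ≤ (-δ) ^ α := by
            have := rpow_sub_le_sub_rpow' (p := α) hα.le h1 hb (by linarith : x + δ ≤ x)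
            have he : x - (x + δ) = -δ := by ring
            rwa [he] at this
          have h3 : (-δ) ^ α ≤ A ^ α :=
            Real.rpow_le_rpow (by linarith) (by cases abs_le.1 hδ; linarith) hα.le
          have hmm : (x ^ α - (x + δ) ^ α) * (-δ) ≤ A ^ α * A :=
            mul_le_mul (h2.trans h3) (by cases abs_le.1 hδ; linarith) (by linarith) hAα
          nlinarith [hmm]
      nlinarith [mul_nonneg hAα hA]
    · obtain ⟨K, hK⟩ : ∃ K : ℝ, K = (2*A) ^ (α - 1) + 2 ^ (α - 1) := ⟨_, rfl⟩
      have hAp : (0:ℝ) ≤ (2*A) ^ (α - 1) := Real.rpow_nonneg (by linarith) _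
      have h2p1 : (1:ℝ) ≤ 2 ^ (α - 1) := Real.one_le_rpow (by norm_num) (by linarith)
      have hK1 : 1 ≤ K := by rw [hK]; linarith
      have hK0 : 0 ≤ K := by linarith
      refine ⟨α * A^2 * K, by positivity, ?_⟩
      intro x δ hx hb hδ
      have hmax : max (α - 1) 0 = α - 1 := max_eq_left (by linarith)
      rw [hmax]
      have hxp : (0:ℝ) ≤ x ^ (α - 1) := Real.rpow_nonneg hx _
      have hbnd := pow_bound_aux' (α := α) (A := A) (x := x) h1.le hA hx
      rw [← hK] at hbnd
      have hαA2 : (0:ℝ) ≤ α * A^2 := by positivity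
      rcases le_total 0 δ with hd | hd
      · have ht := rpow_tangent' (p := α) h1.le hx hb
        have he : x + δ - x = δ := by ring
        rw [he] at ht
        have hmono : (x+δ) ^ (α-1) ≤ (x+A) ^ (α-1) :=
          Real.rpow_le_rpow hb (by have := le_of_abs_le hδ; linarith) (by linarith)
        have hδA : δ ≤ A := le_of_abs_le hδ
        have hsq : δ^2 ≤ A^2 := by nlinarith
        have hbp : (0:ℝ) ≤ (x+δ)^(α-1) := Real.rpow_nonneg hb _
        have h6 : ((x + δ) ^ α - x ^ α) * δ ≤ α * (x+δ)^(α-1) * δ^2 := by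
          nlinarith [ht, hd]
        have hmul : (x+δ)^(α-1) * δ^2 ≤ (x+A)^(α-1) * A^2 :=
          mul_le_mul hmono hsq (sq_nonneg δ) (Real.rpow_nonneg (by linarith) _)
        have h7 : α * ((x+δ)^(α-1) * δ^2) ≤ α * ((x+A)^(α-1) * A^2) :=
          mul_le_mul_of_nonneg_left hmul hα.le
        have h8 : α * A^2 * ((x+A)^(α-1)) ≤ α * A^2 * (K * (1 + x ^ (α-1))) :=
          mul_le_mul_of_nonneg_left hbnd hαA2
        nlinarith [h6, h7, h8]
      · have ht := rpow_tangent' (p := α) h1.le hb hx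
        have he : x - (x + δ) = -δ := by ring
        rw [he] at ht
        have hδA : -δ ≤ A := by cases abs_le.1 hδ; linarith
        have hsq : δ^2 ≤ A^2 := by nlinarith
        have h6 : ((x + δ) ^ α - x ^ α) * δ ≤ α * x^(α-1) * δ^2 := by
          nlinarith [ht, hd]
        have h7 : α * x^(α-1) * δ^2 ≤ α * x^(α-1) * A^2 :=
          mul_le_mul_of_nonneg_left hsq (mul_nonneg hα.le hxp)
        have h9 : x ^ (α-1) ≤ K * (1 + x ^ (α-1)) := by
          nlinarith [mul_nonneg (show (0:ℝ) ≤ K - 1 by linarith) hxp]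
        have h10 : α * A^2 * (x ^ (α-1)) ≤ α * A^2 * (K * (1 + x ^ (α-1))) :=
          mul_le_mul_of_nonneg_left h9 hαA2
        nlinarith [h6, h7, h10]
  obtain ⟨C0, hC0, hkey⟩ := key
  refine ⟨C0, hC0, ?_⟩
  intro x δ hx hb hδ
  have hstep1 : (x + δ) ^ (α + 1) / (α + 1) - x ^ (α + 1) / (α + 1) ≤ (x + δ) ^ α * δ := by
    have h := rpow_tangent' (p := α + 1) (by linarith) hx hb
    have he : α + 1 - 1 = α := by ring
    rw [he] at h
    have he2 : x + δ - x = δ := by ring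
    rw [he2] at h
    have hpos : (0:ℝ) < α + 1 := by linarith
    rw [div_sub_div_same, div_le_iff₀ hpos]
    nlinarith
  have h2 := hkey x δ hx hb hδ
  nlinarith

/-- MaxWeight-α drift condition: with `f(x) = x^α` (`α > 0`) and a sublinear increasing
`g` with `x^(α−1)/g(x^α) → 0`, the Lyapunov function `V(L) = Σ L_{ij}^{α+1}/(α+1)`
satisfies, for any direction `Δ` with `|Δ_{ij}| ≤ A_max` and `L + Δ ≥ 0`,
`V(L+Δ) − V(L) ≤ ⟨f(L), Δ⟩ + C·(1 + Σ L_{ij}^{max(α−1,0)})` for a constant `C`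
depending only on `N, α, A_max`. -/
theorem stmt19 (N : ℕ) (α A_max : ℝ) (hα : 0 < α) (hAmax : 0 ≤ A_max)
    (g : ℝ → ℝ) (hg_mono : StrictMono g)
    (hg_sub : Filter.Tendsto (fun x => g x / x) Filter.atTop (nhds 0))
    (hg_lim : Filter.Tendsto (fun x : ℝ => x ^ (α - 1) / g (x ^ α))
      Filter.atTop (nhds 0)) :
    ∃ C : ℝ, ∀ (L Δ : Matrix (Fin N) (Fin N) ℝ),
      (∀ i j, 0 ≤ L i j) → (∀ i j, 0 ≤ L i j + Δ i j) → (∀ i j, |Δ i j| ≤ A_max) →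
      (∑ i, ∑ j, ((L i j + Δ i j) ^ (α + 1) / (α + 1))) -
          (∑ i, ∑ j, ((L i j) ^ (α + 1) / (α + 1)))
        ≤ (∑ i, ∑ j, (L i j) ^ α * Δ i j) +
            C * (1 + ∑ i, ∑ j, (L i j) ^ (max (α - 1) 0)) := by
  obtain ⟨C0, hC0, hpt⟩ := ptC' α A_max hα hAmax
  refine ⟨C0 * ((N:ℝ)^2 + 1), ?_⟩
  intro L Δ hL hLΔ hΔ
  have hS : 0 ≤ ∑ i, ∑ j, (L i j) ^ (max (α - 1) 0) :=
    Finset.sum_nonneg fun i _ => Finset.sum_nonneg fun j _ => Real.rpow_nonneg (hL i j) _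
  have hdiff : (∑ i, ∑ j, ((L i j + Δ i j) ^ (α + 1) / (α + 1))) -
      (∑ i, ∑ j, ((L i j) ^ (α + 1) / (α + 1)))
      = ∑ i, ∑ j, ((L i j + Δ i j) ^ (α + 1) / (α + 1) -
          (L i j) ^ (α + 1) / (α + 1)) := by
    rw [← Finset.sum_sub_distrib]
    exact Finset.sum_congr rfl fun i _ => (Finset.sum_sub_distrib _ _).symm
  have hbound : ∑ i, ∑ j, ((L i j + Δ i j) ^ (α + 1) / (α + 1) -
      (L i j) ^ (α + 1) / (α + 1))
      ≤ ∑ i, ∑ j, ((L i j) ^ α * Δ i j + C0 * (1 + (L i j) ^ (max (α - 1) 0))) :=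
    Finset.sum_le_sum fun i _ => Finset.sum_le_sum fun j _ =>
      hpt _ _ (hL i j) (hLΔ i j) (hΔ i j)
  have hsplit : ∑ i, ∑ j, ((L i j) ^ α * Δ i j + C0 * (1 + (L i j) ^ (max (α - 1) 0)))
      = (∑ i, ∑ j, (L i j) ^ α * Δ i j) +
        C0 * ((N:ℝ)^2 + ∑ i, ∑ j, (L i j) ^ (max (α - 1) 0)) := by
    simp only [Finset.sum_add_distrib, Finset.mul_sum, mul_add, mul_one,
      Finset.sum_const, Finset.card_univ, Fintype.card_fin, nsmul_eq_mul]
    ring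
  have hfin : C0 * ((N:ℝ)^2 + ∑ i, ∑ j, (L i j) ^ (max (α - 1) 0))
      ≤ C0 * ((N:ℝ)^2 + 1) * (1 + ∑ i, ∑ j, (L i j) ^ (max (α - 1) 0)) := by
    nlinarith [mul_nonneg (mul_nonneg hC0 (sq_nonneg (N:ℝ))) hS, mul_nonneg hC0 hS]
  rw [hdiff]
  calc ∑ i, ∑ j, ((L i j + Δ i j) ^ (α + 1) / (α + 1) - (L i j) ^ (α + 1) / (α + 1))
      ≤ ∑ i, ∑ j, ((L i j) ^ α * Δ i j + C0 * (1 + (L i j) ^ (max (α - 1) 0))) := hbound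
    _ = (∑ i, ∑ j, (L i j) ^ α * Δ i j) +
        C0 * ((N:ℝ)^2 + ∑ i, ∑ j, (L i j) ^ (max (α - 1) 0)) := hsplit
    _ ≤ (∑ i, ∑ j, (L i j) ^ α * Δ i j) +
        C0 * ((N:ℝ)^2 + 1) * (1 + ∑ i, ∑ j, (L i j) ^ (max (α - 1) 0)) := by linarith
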